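/- There is no finite digraph D such that: (a) there is a homomorphism from D to P_3; (b) there is a homomorphism from P_2 to D; (c) there is no homomorphism from D to P_2; and (d) for every finite digraph C, if there is a homomorphism from P_2 to C and a homomorphism from C to D, then C is hom-equivalent to D or C is hom-equivalent to P_2. (In query terms: no Boolean conjunctive query O over a single binary relation satisfies P_3 ⊑ O ⊑_m P_2, where ⊑_m denotes maximal containment.) -/

import Mathlib

/-- A digraph homomorphism from `(V, E)` to `(W, F)`. -/
def DigraphHom {V W : Type*} (E : V → V → Prop) (F : W → W → Prop) (h : V → W) : Prop :=
  ∀ u v, E u v → F (h u) (h v)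

/-- There exists a digraph homomorphism from `(V, E)` to `(W, F)`. -/
def HomEx {V W : Type*} (E : V → V → Prop) (F : W → W → Prop) : Prop :=
  ∃ h : V → W, DigraphHom E F h

/-- The oriented path `O_s` for a word `s ∈ {0,1}^n`: vertices `0, …, n`, and for
each `j < n` the edge `j → j+1` if `s_j = 1` (true) and `j+1 → j` if `s_j = 0` (false). -/
def OPath (s : List Bool) (u v : Fin (s.length + 1)) : Prop :=
  ∃ j : Fin s.length,
    (s.get j = true ∧ (u : ℕ) = (j : ℕ) ∧ (v : ℕ) = (j : ℕ) + 1) ∨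
    (s.get j = false ∧ (u : ℕ) = (j : ℕ) + 1 ∧ (v : ℕ) = (j : ℕ))

/-- The word `1^n`, so that `OPath (PWord n)` is the directed path `P_n`. -/
def PWord (n : ℕ) : List Bool := List.replicate n true

/-- The word `(01)^i 1`. -/
def QTail : ℕ → List Bool
  | 0 => [true]
  | i + 1 => false :: true :: QTail i

/-- The word `11(01)^i 1`, so that `OPath (QWord i)` is the oriented path
`Q_i = O_{11(01)^i 1}` for `i ≥ 1`, and `OPath (QWord 0)` is `Q_0 = P_3`. -/
def QWord (i : ℕ) : List Bool := true :: true :: QTail i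

-- basic facts
lemma homex_trans {U V W : Type*} {E : U → U → Prop} {F : V → V → Prop} {G : W → W → Prop}
    (h1 : HomEx E F) (h2 : HomEx F G) : HomEx E G := by
  obtain ⟨f, hf⟩ := h1; obtain ⟨g, hg⟩ := h2
  exact ⟨g ∘ f, fun u v h => hg _ _ (hf u v h)⟩

lemma qtail_length (n : ℕ) : (QTail n).length = 2*n+1 := by
  induction n with
  | zero => rfl
  | succ i ih => simp [QTail, ih]; omega

lemma qword_length (n : ℕ) : (QWord n).length = 2*n+3 := by
  simp [QWord, qtail_length]

lemma pword_length (n : ℕ) : (PWord n).length = n := by simp [PWord]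

lemma qtail_get (n p : ℕ) (h : p < (QTail n).length) :
    (QTail n).get ⟨p, h⟩ = true ↔ (p % 2 = 1 ∨ p = 2*n) := by
  induction n generalizing p with
  | zero =>
    have hp : p = 0 := by simpa [QTail] using h
    subst hp; simp [QTail]
  | succ i ih =>
    match p with
    | 0 => simp [QTail]
    | 1 => simp [QTail]
    | (q+2) =>
      have h' : q < (QTail i).length := by
        have := qtail_length i; have := qtail_length (i+1)
        omega
      have : (QTail (i+1)).get ⟨q+2, h⟩ = (QTail i).get ⟨q, h'⟩ := rfl
      rw [this, ih q h']
      omega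

lemma qword_get (n p : ℕ) (h : p < (QWord n).length) :
    (QWord n).get ⟨p, h⟩ = true ↔ (p = 0 ∨ p % 2 = 1 ∨ p = 2*n+2) := by
  match p with
  | 0 => simp [QWord]
  | 1 => simp [QWord]
  | (q+2) =>
    have h' : q < (QTail n).length := by
      have := qword_length n; have := qtail_length n; omega
    have : (QWord n).get ⟨q+2, h⟩ = (QTail n).get ⟨q, h'⟩ := rfl
    rw [this, qtail_get n q h']
    omega

-- edge characterizations
lemma pword_edge {n : ℕ} (u v : Fin ((PWord n).length + 1)) :
    OPath (PWord n) u v ↔ (v : ℕ) = (u : ℕ) + 1 := by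
  constructor
  · rintro ⟨j, hj | hj⟩
    · omega
    · exfalso
      have : (PWord n).get j = true := List.eq_of_mem_replicate (List.get_mem ..)
      rw [this] at hj; exact absurd hj.1 (by simp)
  · intro hv
    have hu : (u : ℕ) < (PWord n).length := by
      have := v.isLt; omega
    refine ⟨⟨u, hu⟩, Or.inl ⟨by simp [PWord], rfl, hv⟩⟩

lemma qword_edge {n : ℕ} (u v : Fin ((QWord n).length + 1)) :
    OPath (QWord n) u v ↔
      (((v:ℕ) = (u:ℕ) + 1 ∧ ((u:ℕ) = 0 ∨ (u:ℕ) % 2 = 1 ∨ (u:ℕ) = 2*n+2)) ∨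
       ((u:ℕ) = (v:ℕ) + 1 ∧ (v:ℕ) % 2 = 0 ∧ 2 ≤ (v:ℕ) ∧ (v:ℕ) ≤ 2*n+1)) := by
  have hlen := qword_length n
  constructor
  · rintro ⟨j, hj | hj⟩
    · left
      refine ⟨by omega, ?_⟩
      have := (qword_get n j j.isLt).mp (by convert hj.1)
      omega
    · right
      have hne : ¬ ((j:ℕ) = 0 ∨ (j:ℕ) % 2 = 1 ∨ (j:ℕ) = 2*n+2) := by
        intro hc
        have := (qword_get n j j.isLt).mpr hc
        rw [hj.1] at this; exact absurd this (by simp)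
      have hjl := j.isLt
      omega
  · rintro (⟨h1, h2⟩ | ⟨h1, h2, h3, h4⟩)
    · have hu : (u:ℕ) < (QWord n).length := by have := v.isLt; omega
      exact ⟨⟨u, hu⟩, Or.inl ⟨(qword_get n u hu).mpr h2, rfl, h1⟩⟩
    · have hv : (v:ℕ) < (QWord n).length := by omega
      refine ⟨⟨v, hv⟩, Or.inr ⟨?_, h1, rfl⟩⟩
      have : ¬ ((v:ℕ) = 0 ∨ (v:ℕ) % 2 = 1 ∨ (v:ℕ) = 2*n+2) := by omega
      cases hg : (QWord n).get ⟨v, hv⟩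
      · rfl
      · exact absurd ((qword_get n v hv).mp hg) this

/-- Vertex `p` of `Q_n`. -/
def vq (n p : ℕ) (hp : p < 2*n+4) : Fin ((QWord n).length + 1) :=
  ⟨p, by rw [qword_length]; omega⟩

/-- The level function of `Q_n` (on ℕ coordinates). -/
def levelQ (n v : ℕ) : ℕ :=
  if v = 0 then 0 else if v = 2*n+3 then 3 else if v % 2 = 0 then 2 else 1

lemma levelQ_le (n v : ℕ) : levelQ n v ≤ 3 := by
  unfold levelQ; split_ifs <;> omega

lemma levelQ_edge {n : ℕ} {u v : Fin ((QWord n).length + 1)} (h : OPath (QWord n) u v) :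
    levelQ n v = levelQ n u + 1 := by
  have hL := qword_length n
  have hu := u.isLt; have hv := v.isLt
  rcases (qword_edge u v).mp h with ⟨h1, h2⟩ | ⟨h1, h2, h3, h4⟩ <;>
    · unfold levelQ; split_ifs <;> omega

lemma levelQ_zero {n v : ℕ} (h : levelQ n v = 0) : v = 0 := by
  unfold levelQ at h; split_ifs at h <;> omega

lemma levelQ_three {n v : ℕ} (h : levelQ n v = 3) : v = 2*n+3 := by
  unfold levelQ at h; split_ifs at h <;> omega

lemma q_edge_fwd (n p q : ℕ) (hp : p < 2*n+3) (hq : q = p+1)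
    (hb1 : p < 2*n+4) (hb2 : q < 2*n+4) (hc : p = 0 ∨ p % 2 = 1 ∨ p = 2*n+2) :
    OPath (QWord n) (vq n p hb1) (vq n q hb2) :=
  (qword_edge _ _).mpr (Or.inl ⟨hq, hc⟩)

lemma q_edge_bwd (n p q : ℕ) (h2 : 2 ≤ p) (h3 : p ≤ 2*n+1) (hq : q = p+1) (he : p % 2 = 0)
    (hb1 : p < 2*n+4) (hb2 : q < 2*n+4) :
    OPath (QWord n) (vq n q hb2) (vq n p hb1) :=
  (qword_edge _ _).mpr (Or.inr ⟨hq, he, h2, h3⟩)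

/-- Any vertex of Q_n with a level function: hom from Q_n raises level by 3 end to end. -/
lemma q_level_top {n : ℕ} {W : Type*} {F : W → W → Prop} (lv : W → ℕ)
    (hlv : ∀ u v, F u v → lv v = lv u + 1)
    (h : Fin ((QWord n).length + 1) → W) (hh : DigraphHom (OPath (QWord n)) F h) :
    lv (h (vq n (2*n+3) (by omega))) = lv (h (vq n 0 (by omega))) + 3 := by
  have key : ∀ j (hj : j ≤ n), lv (h (vq n (2*j+2) (by omega))) = lv (h (vq n 0 (by omega))) + 2 := by
    intro j
    induction j with
    | zero =>
      intro _
      have e0 := hlv _ _ (hh _ _ (q_edge_fwd n 0 1 (by omega) (by omega) (by omega) (by omega) (by omega)))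
      have e1 := hlv _ _ (hh _ _ (q_edge_fwd n 1 (2*0+2) (by omega) (by omega) (by omega) (by omega) (by omega)))
      omega
    | succ i ih =>
      intro hin
      have hi := ih (by omega)
      have e0 := hlv _ _ (hh _ _ (q_edge_bwd n (2*i+2) (2*i+3) (by omega) (by omega) (by omega) (by omega) (by omega) (by omega)))
      have e1 := hlv _ _ (hh _ _ (q_edge_fwd n (2*i+3) (2*(i+1)+2) (by omega) (by omega) (by omega) (by omega) (by omega)))
      omega
  have hk := key n le_rfl
  have e := hlv _ _ (hh _ _ (q_edge_fwd n (2*n+2) (2*n+3) (by omega) (by omega) (by omega) (by omega) (by omega)))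
  omega

/-- P₂ maps into every Q_n. -/
lemma p2_to_q (n : ℕ) : HomEx (OPath (PWord 2)) (OPath (QWord n)) := by
  refine ⟨fun w => vq n (w : ℕ) ?_, ?_⟩
  · have hL := pword_length 2; have := w.isLt; omega
  · intro u v he
    have hvu := (pword_edge u v).mp he
    have hL := pword_length 2
    have hv := v.isLt
    refine (qword_edge _ _).mpr (Or.inl ⟨by simp [vq, hvu], ?_⟩)
    simp only [vq]
    omega

/-- Q_n does not map into P₂. -/
lemma q_not_p2 (n : ℕ) : ¬ HomEx (OPath (QWord n)) (OPath (PWord 2)) := by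
  rintro ⟨h, hh⟩
  have := q_level_top (n := n) (W := Fin ((PWord 2).length + 1)) (F := OPath (PWord 2))
    (fun w => (w : ℕ)) (fun u v he => (pword_edge u v).mp he) h hh
  have h1 := (h (vq n (2*n+3) (by omega))).isLt
  have hL := pword_length 2
  omega

/-- Q_{n+1} maps into Q_n. -/
lemma q_succ_hom (n : ℕ) : HomEx (OPath (QWord (n+1))) (OPath (QWord n)) := by
  refine ⟨fun w => vq n (if (w : ℕ) ≤ 2*n+2 then (w : ℕ) else (w : ℕ) - 2) ?_, ?_⟩
  · have hL := qword_length (n+1); have := w.isLt; split <;> omega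
  · intro u v he
    have hL := qword_length (n+1)
    have hu := u.isLt; have hv := v.isLt
    rcases (qword_edge u v).mp he with ⟨h1, h2⟩ | ⟨h1, h2, h3, h4⟩ <;>
      · apply (qword_edge _ _).mpr
        simp only [vq]
        split_ifs <;> omega

/-- Q_n does not map into Q_{n+1}. -/
lemma q_not_succ (n : ℕ) : ¬ HomEx (OPath (QWord n)) (OPath (QWord (n+1))) := by
  rintro ⟨h, hh⟩
  have hlv : ∀ u v, OPath (QWord (n+1)) u v →
      levelQ (n+1) (v : ℕ) = levelQ (n+1) (u : ℕ) + 1 := fun u v he => levelQ_edge he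
  have htop := q_level_top (n := n) (W := Fin ((QWord (n+1)).length + 1))
    (F := OPath (QWord (n+1))) (fun w => levelQ (n+1) (w : ℕ)) hlv h hh
  have hb := levelQ_le (n+1) ((h (vq n (2*n+3) (by omega))) : ℕ)
  have h0 : levelQ (n+1) ((h (vq n 0 (by omega))) : ℕ) = 0 := by omega
  have h3 : levelQ (n+1) ((h (vq n (2*n+3) (by omega))) : ℕ) = 3 := by omega
  have h0' : ((h (vq n 0 (by omega))) : ℕ) = 0 := levelQ_zero h0
  have h3' : ((h (vq n (2*n+3) (by omega))) : ℕ) = 2*(n+1)+3 := levelQ_three h3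
  -- distance argument
  have hstep : ∀ p, p < 2*n+3 → ∀ (hp : p < 2*n+4) (hp1 : p+1 < 2*n+4),
      ((h (vq n (p+1) hp1)) : ℕ) ≤ ((h (vq n p hp)) : ℕ) + 1 := by
    intro p hplt hp hp1
    by_cases hcond : p = 0 ∨ p % 2 = 1 ∨ p = 2*n+2
    · have he := hh _ _ (q_edge_fwd n p (p+1) hplt rfl hp hp1 hcond)
      rcases (qword_edge _ _).mp he with ⟨h1, _⟩ | ⟨h1, _⟩ <;> omega
    · have he := hh _ _ (q_edge_bwd n p (p+1) (by omega) (by omega) rfl (by omega) hp hp1)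
      rcases (qword_edge _ _).mp he with ⟨h1, _⟩ | ⟨h1, _⟩ <;> omega
  have hdist : ∀ p (hp : p < 2*n+4), ((h (vq n p hp)) : ℕ) ≤ ((h (vq n 0 (by omega))) : ℕ) + p := by
    intro p
    induction p with
    | zero => intro hp; exact le_refl _
    | succ q ih =>
      intro hp
      have h1 := ih (by omega)
      have h2 := hstep q (by omega) (by omega) hp
      omega
  have := hdist (2*n+3) (by omega)
  omega

/-- Vertices of level 1 or 2 reachable from a grounded entry point by a walk in levels {1,2}. -/
inductive Marked {V : Type} (E : V → V → Prop) (l : V → ℕ) : V → Prop where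
  | base : ∀ a u, E a u → l a = 0 → Marked E l u
  | fwd : ∀ u v, Marked E l u → E u v → l v ≤ 2 → Marked E l v
  | bwd : ∀ u v, Marked E l u → E v u → 1 ≤ l v → Marked E l v

lemma marked_level {V : Type} {E : V → V → Prop} {l : V → ℕ}
    (hl : ∀ u v, E u v → l v = l u + 1) :
    ∀ v, Marked E l v → 1 ≤ l v ∧ l v ≤ 2 := by
  intro v hm
  induction hm with
  | base a u hE h0 => have := hl a u hE; omega
  | fwd u v _ hE hle ih => have := hl u v hE; omega
  | bwd u v _ hE h1 ih => have := hl v u hE; omega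

lemma marked_walk {V : Type} {E : V → V → Prop} {l : V → ℕ}
    (hl : ∀ u v, E u v → l v = l u + 1) :
    ∀ v, Marked E l v →
      ∃ m : ℕ, ∃ g : ℕ → V, 1 ≤ m ∧ g m = v ∧
        (∀ j ≤ m, l (g j) = if j = 0 then 0 else if j % 2 = 1 then 1 else 2) ∧
        (∀ j < m, if j = 0 ∨ j % 2 = 1 then E (g j) (g (j+1)) else E (g (j+1)) (g j)) := by
  intro v hm
  induction hm with
  | base a u hE h0 =>
    refine ⟨1, fun j => if j = 0 then a else u, le_rfl, by simp, ?_, ?_⟩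
    · intro j hj
      interval_cases j
      · simpa using h0
      · have := hl a u hE; simp [h0] at this ⊢; omega
    · intro j hj
      interval_cases j
      simpa using hE
  | fwd u v hu hE hle ih =>
    obtain ⟨m, g, hm1, hgm, hlev, hedge⟩ := ih
    have hlu := (marked_level hl u hu)
    have hlvu := hl u v hE
    have hlgm := hlev m le_rfl
    have hmodd : m % 2 = 1 ∧ l u = 1 := by
      rw [hgm] at hlgm
      split_ifs at hlgm <;> omega
    refine ⟨m+1, fun j => if j ≤ m then g j else v, by omega, by simp, ?_, ?_⟩
    · intro j hj
      by_cases hjm : j ≤ m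
      · simp only [if_pos hjm]; exact hlev j hjm
      · have hj1 : j = m + 1 := by omega
        simp only [if_neg hjm, hj1]
        rw [if_neg (show ¬ (m+1 ≤ m) by omega), if_neg (show ¬ (m+1 = 0) by omega),
          if_neg (show ¬ ((m+1) % 2 = 1) by omega)]
        omega
    · intro j hj
      by_cases hjm : j < m
      · have h1 : j ≤ m := by omega
        have h2 : j + 1 ≤ m := by omega
        simp only [if_pos h1, if_pos h2]
        exact hedge j hjm
      · have hj1 : j = m := by omega
        rw [hj1]
        have hng : ¬ (m+1 ≤ m) := by omega
        simp only [if_pos (le_refl m), if_neg hng,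
          if_pos (Or.inr hmodd.1 : m = 0 ∨ m % 2 = 1), hgm]
        exact hE
  | bwd u v hu hE h1 ih =>
    obtain ⟨m, g, hm1, hgm, hlev, hedge⟩ := ih
    have hlu := (marked_level hl u hu)
    have hlvu := hl v u hE
    have hlgm := hlev m le_rfl
    have hmeven : m % 2 = 0 ∧ 2 ≤ m ∧ l u = 2 := by
      rw [hgm] at hlgm
      split_ifs at hlgm <;> omega
    refine ⟨m+1, fun j => if j ≤ m then g j else v, by omega, by simp, ?_, ?_⟩
    · intro j hj
      by_cases hjm : j ≤ m
      · simp only [if_pos hjm]; exact hlev j hjm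
      · have hj1 : j = m + 1 := by omega
        simp only [if_neg hjm, hj1]
        rw [if_neg (show ¬ (m+1 ≤ m) by omega), if_neg (show ¬ (m+1 = 0) by omega),
          if_pos (show (m+1) % 2 = 1 by omega)]
        omega
    · intro j hj
      by_cases hjm : j < m
      · have h1 : j ≤ m := by omega
        have h2 : j + 1 ≤ m := by omega
        simp only [if_pos h1, if_pos h2]
        exact hedge j hjm
      · have hj1 : j = m := by omega
        rw [hj1]
        have hng : ¬ (m+1 ≤ m) := by omega
        have hno : ¬ (m = 0 ∨ m % 2 = 1) := by omega
        simp only [if_pos (le_refl m), if_neg hng, if_neg hno, hgm]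
        exact hE

lemma exists_q_hom {V : Type} {E : V → V → Prop}
    (ha : HomEx E (OPath (PWord 3)))
    (hc : ¬ HomEx E (OPath (PWord 2))) :
    ∃ k, HomEx (OPath (QWord k)) E := by
  classical
  obtain ⟨h3, hh3⟩ := ha
  set l : V → ℕ := fun v => ((h3 v : ℕ)) with hldef
  have hl : ∀ u v, E u v → l v = l u + 1 := fun u v he => (pword_edge _ _).mp (hh3 u v he)
  have hlb : ∀ v, l v ≤ 3 := by
    intro v; have := (h3 v).isLt; have hL := pword_length 3; simp only [l, hldef]; omega
  by_cases hcase : ∃ v w, Marked E l v ∧ E v w ∧ l w = 3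
  · obtain ⟨v, w, hm, hE, hw3⟩ := hcase
    obtain ⟨m, g, hm1, hgm, hlev, hedge⟩ := marked_walk hl v hm
    have hlv : l v = 2 := by have := hl v w hE; omega
    have hlgm := hlev m le_rfl
    have hme : m % 2 = 0 ∧ 2 ≤ m := by
      rw [hgm, hlv] at hlgm; split_ifs at hlgm <;> omega
    obtain ⟨k, hk⟩ : ∃ k, m = 2*k+2 := ⟨(m-2)/2, by omega⟩
    refine ⟨k, fun x => if (x : ℕ) ≤ m then g (x : ℕ) else w, ?_⟩
    intro x y he
    have hL := qword_length k
    have hx := x.isLt; have hy := y.isLt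
    rcases (qword_edge x y).mp he with ⟨h1, h2⟩ | ⟨h1, h2, h3', h4⟩
    · by_cases hym : (y : ℕ) ≤ m
      · have hxm : (x : ℕ) ≤ m := by omega
        simp only [if_pos hym, if_pos hxm]
        have hcond : (x : ℕ) = 0 ∨ (x : ℕ) % 2 = 1 := by omega
        have := hedge (x : ℕ) (by omega)
        rw [if_pos hcond] at this
        rw [h1]
        exact this
      · have hxm : (x : ℕ) ≤ m := by omega
        have hxem : (x : ℕ) = m := by omega
        simp only [if_pos hxm, if_neg hym, hxem, hgm, if_pos (le_refl m)]
        exact hE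
    · have hym : (y : ℕ) ≤ m := by omega
      have hxm : (x : ℕ) ≤ m := by omega
      simp only [if_pos hym, if_pos hxm]
      have hcond : ¬ ((y : ℕ) = 0 ∨ (y : ℕ) % 2 = 1) := by omega
      have := hedge (y : ℕ) (by omega)
      rw [if_neg hcond] at this
      rw [h1]
      exact this
  · exfalso
    apply hc
    refine ⟨fun v => ⟨if l v = 0 then 0 else if Marked E l v then l v else l v - 1, ?_⟩, ?_⟩
    · have := hlb v; have hL := pword_length 2
      split_ifs with hA hB
      · omega
      · have := marked_level hl v hB; omega
      · omega
    · intro u v he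
      apply (pword_edge _ _).mpr
      show (if l v = 0 then 0 else if Marked E l v then l v else l v - 1)
        = (if l u = 0 then 0 else if Marked E l u then l u else l u - 1) + 1
      have h1 := hl u v he
      have hbv := hlb v
      by_cases h0 : l u = 0
      · have hmv : Marked E l v := Marked.base u v he h0
        rw [if_pos h0, if_neg (by omega : ¬ l v = 0), if_pos hmv]; omega
      · by_cases hmu : Marked E l u
        · have h12 := marked_level hl u hmu
          have hlu2 : l u = 1 := by
            by_contra hne
            exact hcase ⟨u, v, hmu, he, by omega⟩
          have hmv : Marked E l v := Marked.fwd u v hmu he (by omega)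
          rw [if_neg h0, if_neg (by omega : ¬ l v = 0), if_pos hmu, if_pos hmv]; omega
        · have hmvn : ¬ Marked E l v := fun hmv => hmu (Marked.bwd v u hmv he (by omega))
          rw [if_neg h0, if_neg (by omega : ¬ l v = 0), if_neg hmu, if_neg hmvn]; omega

theorem stmt_6 :
    ¬ ∃ (V : Type) (E : V → V → Prop), Finite V ∧
      -- (a) there is a homomorphism from D to P₃
      HomEx E (OPath (PWord 3)) ∧
      -- (b) there is a homomorphism from P₂ to D
      HomEx (OPath (PWord 2)) E ∧
      -- (c) there is no homomorphism from D to P₂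
      ¬ HomEx E (OPath (PWord 2)) ∧
      -- (d) every finite digraph C between P₂ and D is hom-equivalent to D or to P₂
      (∀ (W : Type) (F : W → W → Prop), Finite W →
        HomEx (OPath (PWord 2)) F → HomEx F E →
        (HomEx F E ∧ HomEx E F) ∨
        (HomEx F (OPath (PWord 2)) ∧ HomEx (OPath (PWord 2)) F)) := by
  rintro ⟨V, E, hFin, ha, hb, hc, hd⟩
  obtain ⟨k, hQk⟩ := exists_q_hom ha hc
  rcases hd (Fin ((QWord k).length + 1)) (OPath (QWord k)) (Finite.of_fintype _)
      (p2_to_q k) hQk with ⟨_, hEQ⟩ | ⟨hq2, _⟩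
  · rcases hd (Fin ((QWord (k+1)).length + 1)) (OPath (QWord (k+1))) (Finite.of_fintype _)
        (p2_to_q (k+1)) (homex_trans (q_succ_hom k) hQk) with ⟨_, hEQ1⟩ | ⟨hq2, _⟩
    · exact q_not_succ k (homex_trans hQk hEQ1)
    · exact q_not_p2 (k+1) hq2
  · exact q_not_p2 k hq2
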